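/- Let A, B be unital commutative C*-algebras with endomorphisms δ : A → A, γ : B → B, and let (M(A), α), (M(B), β) be the dual partial dynamical systems. There exists a unital monomorphism T : A → B with T ∘ δ = γ ∘ T if and only if (M(B), β) is an extension of (M(A), α), i.e., there is a continuous surjection Ψ : M(B) → M(A) with Ψ⁻¹(Δ_α) = Δ_β and α(Ψ(x)) = Ψ(β(x)) for all x ∈ Δ_β. -/

import Mathlib

open Classical

/-- Continuous `ℂ`-valued functions separate points of a compact Hausdorff space. -/
lemma stmt4_sep {M : Type*} [TopologicalSpace M] [CompactSpace M] [T2Space M]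
    {p q : M} (h : p ≠ q) : ∃ a : C(M, ℂ), a p ≠ a q := by
  obtain ⟨f, hf0, hf1, -⟩ := exists_continuous_zero_one_of_isClosed
    (isClosed_singleton (x := p)) (isClosed_singleton (x := q))
    (by simpa [Set.disjoint_singleton] using h)
  refine ⟨(⟨Complex.ofReal, Complex.continuous_ofReal⟩ : C(ℝ, ℂ)).comp f, ?_⟩
  have h0 : f p = 0 := hf0 rfl
  have h1 : f q = 1 := hf1 rfl
  simp [h0, h1]

/-- Every unital star algebra homomorphism `C(M, ℂ) → C(M', ℂ)` is induced by a
continuous map `M' → M`. -/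
lemma stmt4_exists_psi {M M' : Type*} [TopologicalSpace M] [CompactSpace M] [T2Space M]
    [TopologicalSpace M'] [CompactSpace M'] [T2Space M']
    (T : C(M, ℂ) →⋆ₐ[ℂ] C(M', ℂ)) :
    ∃ Ψ : C(M', M), ∀ (a : C(M, ℂ)) (x : M'), T a x = a (Ψ x) := by
  let φ : M' → WeakDual.characterSpace ℂ C(M, ℂ) := fun x =>
    WeakDual.CharacterSpace.equivAlgHom.symm
      ((ContinuousMap.evalAlgHom ℂ ℂ x).comp T.toAlgHom)
  have hφapp : ∀ (x : M') (a : C(M, ℂ)), (φ x : C(M, ℂ) → ℂ) a = T a x := by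
    intro x a
    simp [φ, WeakDual.CharacterSpace.equivAlgHom_symm_coe]
  have hφ : Continuous φ := by
    apply Continuous.subtype_mk
    apply WeakDual.continuous_of_continuous_eval
    intro a
    exact (T a).continuous.congr (fun x => (hφapp x a).symm)
  let Ψ : C(M', M) :=
    ⟨fun x => (WeakDual.CharacterSpace.homeoEval M ℂ).symm (φ x),
      (WeakDual.CharacterSpace.homeoEval M ℂ).symm.continuous.comp hφ⟩
  refine ⟨Ψ, fun a x => ?_⟩
  have key : WeakDual.CharacterSpace.homeoEval M ℂ (Ψ x) = φ x :=
    (WeakDual.CharacterSpace.homeoEval M ℂ).apply_symm_apply (φ x)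
  have : ((WeakDual.CharacterSpace.homeoEval M ℂ (Ψ x) : WeakDual ℂ C(M, ℂ))) a = a (Ψ x) := rfl
  rw [← hφapp x a, ← key]
  exact this.symm

/-- an endomorphism `γ` of `C(M', ℂ)` extends an endomorphism `δ` of `C(M, ℂ)`
via a unital monomorphism `T` (i.e. `T ∘ δ = γ ∘ T`) iff the dual partial dynamical system
`(M', β)` is an extension of `(M, α)`, i.e. there is a continuous surjection `Ψ : M' → M` with
`Ψ⁻¹(Δα) = Δβ` and `α(Ψ(x)) = Ψ(β(x))` on `Δβ`. -/
theorem stmt4 {M M' : Type*} [TopologicalSpace M] [CompactSpace M] [T2Space M]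
    [TopologicalSpace M'] [CompactSpace M'] [T2Space M']
    (Δα : Set M) (hΔα : IsClopen Δα) (α : C(Δα, M))
    (Δβ : Set M') (hΔβ : IsClopen Δβ) (β : C(Δβ, M'))
    (δ : C(M, ℂ) → C(M, ℂ)) (γ : C(M', ℂ) → C(M', ℂ))
    (hδ : ∀ (a : C(M, ℂ)) (x : M), δ a x = if h : x ∈ Δα then a (α ⟨x, h⟩) else 0)
    (hγ : ∀ (a : C(M', ℂ)) (x : M'), γ a x = if h : x ∈ Δβ then a (β ⟨x, h⟩) else 0) :
    (∃ T : C(M, ℂ) →⋆ₐ[ℂ] C(M', ℂ), Function.Injective T ∧ ∀ a, T (δ a) = γ (T a)) ↔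
    (∃ Ψ : C(M', M), Function.Surjective Ψ ∧ (⇑Ψ) ⁻¹' Δα = Δβ ∧
      ∀ (x : M') (hx : x ∈ Δβ) (hx' : Ψ x ∈ Δα), α ⟨Ψ x, hx'⟩ = Ψ (β ⟨x, hx⟩)) := by
  constructor
  · rintro ⟨T, hinj, hcomm⟩
    obtain ⟨Ψ, hΨ⟩ := stmt4_exists_psi T
    -- surjectivity
    have hsurj : Function.Surjective Ψ := by
      by_contra hns
      simp only [Function.Surjective, not_forall] at hns
      obtain ⟨m, hm⟩ := hns
      push_neg at hm
      have hmr : m ∉ Set.range Ψ := by rintro ⟨x, rfl⟩; exact hm x rfl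
      obtain ⟨f, hf0, hf1, -⟩ := exists_continuous_zero_one_of_isClosed
        ((isCompact_range Ψ.continuous).isClosed) (isClosed_singleton (x := m))
        (by simpa [Set.disjoint_singleton_right] using hmr)
      let a : C(M, ℂ) := (⟨Complex.ofReal, Complex.continuous_ofReal⟩ : C(ℝ, ℂ)).comp f
      have hTa : T a = 0 := by
        ext x
        have : f (Ψ x) = 0 := hf0 ⟨x, rfl⟩
        simp [hΨ a x, a, this]
      have : a = 0 := hinj (by simpa using hTa)
      have ham : a m = 1 := by
        have : f m = 1 := hf1 rfl
        simp [a, this]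
      rw [this] at ham
      simp at ham
    -- preimage condition
    have hpre : (⇑Ψ) ⁻¹' Δα = Δβ := by
      ext x
      have h1 := ContinuousMap.congr_fun (hcomm 1) x
      rw [hΨ (δ 1) x, hδ 1 (Ψ x), hγ (T 1) x] at h1
      simp only [ContinuousMap.one_apply, map_one] at h1
      by_cases hx : x ∈ Δβ <;> by_cases hx' : Ψ x ∈ Δα <;>
        simp_all [Set.mem_preimage]
    refine ⟨Ψ, hsurj, hpre, ?_⟩
    intro x hx hx'
    by_contra hne
    obtain ⟨a, ha⟩ := stmt4_sep hne
    have h1 := ContinuousMap.congr_fun (hcomm a) x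
    rw [hΨ (δ a) x, hδ a (Ψ x), hγ (T a) x, dif_pos hx', dif_pos hx, hΨ a] at h1
    exact ha h1
  · rintro ⟨Ψ, hsurj, hpre, hconj⟩
    refine ⟨ContinuousMap.compStarAlgHom' ℂ ℂ Ψ, ?_, ?_⟩
    · intro a b hab
      ext m
      obtain ⟨x, rfl⟩ := hsurj m
      exact ContinuousMap.congr_fun hab x
    · intro a
      ext x
      simp only [ContinuousMap.compStarAlgHom'_apply, ContinuousMap.comp_apply]
      rw [hδ a (Ψ x), hγ (a.comp Ψ) x]
      by_cases hx : x ∈ Δβ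
      · have hx' : Ψ x ∈ Δα := by rw [← hpre] at hx; exact hx
        rw [dif_pos hx', dif_pos hx, hconj x hx hx']
        rfl
      · have hx' : Ψ x ∉ Δα := by rw [← hpre] at hx; exact hx
        rw [dif_neg hx', dif_neg hx]
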